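/- Let c > 1, θ > 0, and let f, g : [1,∞) → [0,∞) be bounded measurable functions such that f(r) ≤ 1/2 for r ∈ [1, 10c], g(r) ≤ 1/4 for all r, and f(r) ≤ f(r/(10c))² + g(r) for all r ≥ 10c. If ∫_1^∞ r^{θ−1} g(r) dr < ∞, then ∫_1^∞ r^{θ−1} f(r) dr < ∞. -/

import Mathlib

open Set Filter MeasureTheory

private lemma s7_pow_sub_pow : ∀ (e : ℕ) {a b M : ℝ}, 0 ≤ b → b ≤ a → a ≤ M →
    a ^ (e + 1) - b ^ (e + 1) ≤ (e + 1 : ℝ) * M ^ e * (a - b) := by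
  intro e
  induction e with
  | zero => intro a b M hb hba haM; simp
  | succ e ih =>
    intro a b M hb hba haM
    have ha : 0 ≤ a := hb.trans hba
    have hM : 0 ≤ M := ha.trans haM
    have hab : 0 ≤ a - b := sub_nonneg.2 hba
    have h1 := ih hb hba haM
    have h3 : 0 ≤ ((e : ℝ) + 1) * M ^ e * (a - b) := by positivity
    have h2 : b ^ (e + 1) ≤ M ^ (e + 1) := pow_le_pow_left₀ hb (hba.trans haM) _
    have e1 : a * (a ^ (e + 1) - b ^ (e + 1)) ≤ M * (((e : ℝ) + 1) * M ^ e * (a - b)) :=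
      le_trans (mul_le_mul_of_nonneg_left h1 ha) (mul_le_mul_of_nonneg_right haM h3)
    have e2 : (a - b) * b ^ (e + 1) ≤ (a - b) * M ^ (e + 1) :=
      mul_le_mul_of_nonneg_left h2 hab
    have eid : a ^ (e + 1 + 1) - b ^ (e + 1 + 1)
        = a * (a ^ (e + 1) - b ^ (e + 1)) + (a - b) * b ^ (e + 1) := by ring
    have erhs : M * (((e : ℝ) + 1) * M ^ e * (a - b)) + (a - b) * M ^ (e + 1)
        = ((e : ℝ) + 1 + 1) * M ^ (e + 1) * (a - b) := by ring
    push_cast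
    linarith

private lemma s7_summable {Q : ℝ} (hQ : 0 ≤ Q) :
    Summable (fun n : ℕ => Q ^ n * (2⁻¹ : ℝ) ^ (2 ^ n)) := by
  have h2 : Tendsto (fun n : ℕ => Q * (2⁻¹ : ℝ) ^ (2 ^ n)) atTop (nhds (Q * 0)) :=
    Tendsto.const_mul Q
      ((tendsto_pow_atTop_nhds_zero_of_lt_one (by norm_num) (by norm_num)).comp
        (tendsto_pow_atTop_atTop_of_one_lt one_lt_two))
  rw [mul_zero] at h2
  have hev : ∀ᶠ n in atTop, Q * (2⁻¹ : ℝ) ^ (2 ^ n) ≤ 2⁻¹ :=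
    h2.eventually (eventually_le_nhds (by norm_num))
  refine summable_of_ratio_norm_eventually_le (r := 2⁻¹) (by norm_num) ?_
  filter_upwards [hev] with n hn
  have hnn : (0:ℝ) ≤ Q ^ n * (2⁻¹ : ℝ) ^ (2 ^ n) := by positivity
  have hnn1 : (0:ℝ) ≤ Q ^ (n+1) * (2⁻¹ : ℝ) ^ (2 ^ (n+1)) := by positivity
  rw [Real.norm_eq_abs, Real.norm_eq_abs, abs_of_nonneg hnn, abs_of_nonneg hnn1]
  have hE : (2⁻¹ : ℝ) ^ (2 ^ (n + 1)) = ((2⁻¹ : ℝ) ^ (2 ^ n)) ^ 2 := by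
    rw [pow_succ 2 n, pow_mul]
  have hid : Q ^ (n+1) * (2⁻¹ : ℝ) ^ (2 ^ (n+1))
      = (Q * (2⁻¹:ℝ) ^ (2 ^ n)) * (Q ^ n * (2⁻¹:ℝ) ^ (2 ^ n)) := by
    rw [hE, pow_succ]; ring
  rw [hid]
  exact mul_le_mul_of_nonneg_right hn hnn

private noncomputable def s7psi (h : ℕ → ℝ) (m k : ℕ) : ℝ :=
  (2⁻¹ : ℝ) ^ (2 ^ (m + k)) +
    ∑ j ∈ Finset.range m, ((h j + 4⁻¹) ^ (2 ^ (j + k)) - (4⁻¹ : ℝ) ^ (2 ^ (j + k)))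

private lemma s7psi_zero (h : ℕ → ℝ) (k : ℕ) : s7psi h 0 k = (2⁻¹ : ℝ) ^ (2 ^ k) := by
  simp [s7psi]

private lemma s7psi_succ (h : ℕ → ℝ) (m k : ℕ) :
    s7psi h (m + 1) k = ((h 0 + 4⁻¹) ^ (2 ^ k) - (4⁻¹ : ℝ) ^ (2 ^ k))
      + s7psi (fun j => h (j + 1)) m (k + 1) := by
  unfold s7psi
  rw [Finset.sum_range_succ']
  have e1 : ∀ j : ℕ, j + 1 + k = j + (k + 1) := fun j => by omega
  have e2 : m + 1 + k = m + (k + 1) := by omega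
  simp only [e1, e2, Nat.zero_add]
  ring

private lemma s7_quarter (k : ℕ) : (4⁻¹ : ℝ) ^ (2 ^ k) = (2⁻¹ : ℝ) ^ (2 ^ (k + 1)) := by
  have h4 : (4⁻¹ : ℝ) = (2⁻¹ : ℝ) ^ 2 := by norm_num
  rw [h4, ← pow_mul]
  congr 1
  rw [pow_succ]
  exact Nat.mul_comm _ _

private lemma s7psi_nonneg (m : ℕ) (h : ℕ → ℝ) (k : ℕ) (hh : ∀ j < m, 0 ≤ h j) :
    0 ≤ s7psi h m k := by
  unfold s7psi
  have hterm : ∀ j ∈ Finset.range m,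
      (0:ℝ) ≤ (h j + 4⁻¹) ^ (2 ^ (j + k)) - (4⁻¹ : ℝ) ^ (2 ^ (j + k)) := by
    intro j hj
    have h0 := hh j (Finset.mem_range.1 hj)
    have : (4⁻¹ : ℝ) ^ (2 ^ (j + k)) ≤ (h j + 4⁻¹) ^ (2 ^ (j + k)) :=
      pow_le_pow_left₀ (by norm_num) (by linarith) _
    linarith
  have hsum := Finset.sum_nonneg hterm
  have : (0:ℝ) ≤ (2⁻¹ : ℝ) ^ (2 ^ (m + k)) := by positivity
  linarith

private lemma s7psi_le (m : ℕ) : ∀ (h : ℕ → ℝ) (k : ℕ), (∀ j < m, 0 ≤ h j ∧ h j ≤ 4⁻¹) →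
    s7psi h m k ≤ (2⁻¹ : ℝ) ^ (2 ^ k) := by
  induction m with
  | zero => intro h k _; rw [s7psi_zero]
  | succ m ih =>
    intro h k hh
    rw [s7psi_succ]
    have h0 := hh 0 (Nat.succ_pos m)
    have hA : (h 0 + 4⁻¹) ^ (2 ^ k) ≤ (2⁻¹ : ℝ) ^ (2 ^ k) :=
      pow_le_pow_left₀ (by linarith [h0.1]) (by have := h0.2; norm_num; linarith) _
    have htail := ih (fun j => h (j + 1)) (k + 1) (fun j hj => hh (j + 1) (by omega))
    have hq := s7_quarter k
    linarith

private lemma s7psi_sq (m : ℕ) : ∀ (h : ℕ → ℝ) (k : ℕ), (∀ j < m, 0 ≤ h j ∧ h j ≤ 4⁻¹) →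
    (s7psi h m k) ^ 2 ≤ s7psi h m (k + 1) := by
  induction m with
  | zero =>
    intro h k _
    rw [s7psi_zero, s7psi_zero]
    apply le_of_eq
    rw [pow_succ 2 k, pow_mul]
  | succ m ih =>
    intro h k hh
    have h0 := hh 0 (Nat.succ_pos m)
    have hh' : ∀ j < m, 0 ≤ (fun j => h (j + 1)) j ∧ (fun j => h (j + 1)) j ≤ 4⁻¹ :=
      fun j hj => hh (j + 1) (by omega)
    rw [s7psi_succ, s7psi_succ]
    have hχ2 : (s7psi (fun j => h (j + 1)) m (k + 1)) ^ 2
        ≤ s7psi (fun j => h (j + 1)) m (k + 1 + 1) := ih _ (k + 1) hh'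
    have hχle : s7psi (fun j => h (j + 1)) m (k + 1) ≤ (2⁻¹ : ℝ) ^ (2 ^ (k + 1)) :=
      s7psi_le m _ (k + 1) hh'
    have hχ0 : 0 ≤ s7psi (fun j => h (j + 1)) m (k + 1) :=
      s7psi_nonneg m _ (k + 1) (fun j hj => (hh' j hj).1)
    set χ := s7psi (fun j => h (j + 1)) m (k + 1) with hχdef
    set χ' := s7psi (fun j => h (j + 1)) m (k + 1 + 1) with hχ'def
    set u := (h 0 + 4⁻¹) ^ (2 ^ k) with hu
    set v := (4⁻¹ : ℝ) ^ (2 ^ k) with hv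
    have hχv : χ ≤ v := by rw [hv, s7_quarter]; exact hχle
    have huv : v ≤ u := pow_le_pow_left₀ (by norm_num) (by linarith [h0.1]) _
    have hv0 : (0:ℝ) ≤ v := by positivity
    have hu2 : (h 0 + 4⁻¹) ^ (2 ^ (k + 1)) = u ^ 2 := by
      rw [hu, pow_succ 2 k, pow_mul]
    have hv2 : (4⁻¹ : ℝ) ^ (2 ^ (k + 1)) = v ^ 2 := by
      rw [hv, pow_succ 2 k, pow_mul]
    rw [hu2, hv2]
    nlinarith [mul_nonneg (sub_nonneg.2 huv) (sub_nonneg.2 hχv)]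

private lemma s7_subst {g : ℝ → ℝ} (hgm : Measurable g) (θ : ℝ) {a : ℝ} (ha : 0 < a) :
    ∫⁻ r in Ici a, ENNReal.ofReal (r ^ (θ - 1) * g (r / a)) =
      ENNReal.ofReal (a ^ θ) * ∫⁻ s in Ici (1:ℝ), ENNReal.ofReal (s ^ (θ - 1) * g s) := by
  have hF : Measurable fun r : ℝ => ENNReal.ofReal (r ^ (θ - 1) * g (r / a)) :=
    ((measurable_id.pow measurable_const).mul
      (hgm.comp (measurable_id.div_const a))).ennreal_ofReal
  have hpre : (fun x : ℝ => a * x) ⁻¹' (Ici a) = Ici (1:ℝ) := by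
    ext x
    simp only [mem_preimage, mem_Ici]
    constructor
    · intro hx; by_contra hc; push_neg at hc; nlinarith
    · intro hx; nlinarith
  have hmapeq : Measure.map (fun x : ℝ => a * x) (volume.restrict (Ici (1:ℝ)))
      = ENNReal.ofReal |a⁻¹| • volume.restrict (Ici a) := by
    rw [← hpre, ← Measure.restrict_map (measurable_const_mul a) measurableSet_Ici,
      Real.map_volume_mul_left (ne_of_gt ha), Measure.restrict_smul]
  have h2 : ∫⁻ x in Ici (1:ℝ), ENNReal.ofReal ((a * x) ^ (θ - 1) * g ((a * x) / a))
      = ENNReal.ofReal |a⁻¹| * ∫⁻ r in Ici a, ENNReal.ofReal (r ^ (θ - 1) * g (r / a)) := by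
    rw [← lintegral_map hF (measurable_const_mul a), hmapeq, lintegral_smul_measure, smul_eq_mul]
  have h3 : ∫⁻ x in Ici (1:ℝ), ENNReal.ofReal ((a * x) ^ (θ - 1) * g ((a * x) / a))
      = ENNReal.ofReal (a ^ (θ - 1))
        * ∫⁻ x in Ici (1:ℝ), ENNReal.ofReal (x ^ (θ - 1) * g x) := by
    rw [← lintegral_const_mul' _ _ ENNReal.ofReal_ne_top]
    apply setLIntegral_congr_fun_ae measurableSet_Ici
    apply ae_of_all
    intro x hx
    have hx0 : (0:ℝ) ≤ x := le_trans zero_le_one hx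
    rw [mul_div_cancel_left₀ _ (ne_of_gt ha), Real.mul_rpow ha.le hx0,
      ← ENNReal.ofReal_mul (Real.rpow_nonneg ha.le _)]
    ring_nf
  have habs : |a⁻¹| = a⁻¹ := abs_of_pos (inv_pos.2 ha)
  have hcancel : ENNReal.ofReal a * ENNReal.ofReal a⁻¹ = 1 := by
    rw [← ENNReal.ofReal_mul ha.le, mul_inv_cancel₀ (ne_of_gt ha), ENNReal.ofReal_one]
  have hstep : ENNReal.ofReal |a⁻¹| * ∫⁻ r in Ici a, ENNReal.ofReal (r ^ (θ - 1) * g (r / a))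
      = ENNReal.ofReal (a ^ (θ - 1))
        * ∫⁻ x in Ici (1:ℝ), ENNReal.ofReal (x ^ (θ - 1) * g x) := by
    rw [← h2, h3]
  rw [habs] at hstep
  have := congrArg (fun z => ENNReal.ofReal a * z) hstep
  simp only [← mul_assoc, hcancel, one_mul] at this
  rw [this, ← ENNReal.ofReal_mul ha.le]
  congr 2
  rw [show θ = 1 + (θ - 1) by ring, Real.rpow_add ha, Real.rpow_one]
  ring_nf

/-- Gouéré's recursion lemma, integral version:
if ∫_1^∞ r^{θ−1} g(r) dr < ∞ then ∫_1^∞ r^{θ−1} f(r) dr < ∞. -/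
theorem stmt7 (c θ : ℝ) (hc : 1 < c) (hθ : 0 < θ) (f g : ℝ → ℝ)
    (hfm : Measurable f) (hgm : Measurable g)
    (hfb : ∃ M, ∀ r ≥ (1:ℝ), f r ≤ M) (hgb : ∃ M, ∀ r ≥ (1:ℝ), g r ≤ M)
    (hf0 : ∀ r ≥ (1:ℝ), 0 ≤ f r) (hg0 : ∀ r ≥ (1:ℝ), 0 ≤ g r)
    (ha1 : ∀ r ∈ Set.Icc (1:ℝ) (10 * c), f r ≤ 1 / 2)
    (ha2 : ∀ r ≥ (1:ℝ), g r ≤ 1 / 4)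
    (hb : ∀ r ≥ 10 * c, f r ≤ f (r / (10 * c)) ^ 2 + g r)
    (hgint : ∫⁻ r in Set.Ioi (1:ℝ), ENNReal.ofReal (r ^ (θ - 1) * g r) ≠ ⊤) :
    ∫⁻ r in Set.Ioi (1:ℝ), ENNReal.ofReal (r ^ (θ - 1) * f r) ≠ ⊤ := by
  classical
  set K : ℝ := 10 * c with hKdef
  have hK1 : (1:ℝ) < K := by rw [hKdef]; linarith
  have hK0 : (0:ℝ) < K := lt_trans one_pos hK1
  have hKp : ∀ n : ℕ, (0:ℝ) < K ^ n := fun n => pow_pos hK0 n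
  have hKge1 : ∀ n : ℕ, (1:ℝ) ≤ K ^ n := fun n => one_le_pow₀ hK1.le
  -- block decomposition
  have hblock : ∀ r : ℝ, 1 ≤ r → ∃ n : ℕ, K ^ n ≤ r ∧ r < K ^ (n + 1) := by
    intro r hr
    have hex : ∃ n : ℕ, r < K ^ n := pow_unbounded_of_one_lt r hK1
    have hn : r < K ^ (Nat.find hex) := Nat.find_spec hex
    have hn0 : Nat.find hex ≠ 0 := by
      intro h
      rw [h, pow_zero] at hn
      linarith
    obtain ⟨m, hm⟩ := Nat.exists_eq_succ_of_ne_zero hn0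
    refine ⟨m, ?_, by rw [hm] at hn; exact hn⟩
    by_contra hlt
    push_neg at hlt
    exact absurd (Nat.find_min hex (m := m) (by omega) hlt) (fun h => h)
  -- pointwise bound via psi
  have key : ∀ n : ℕ, ∀ r : ℝ, K ^ n ≤ r → r < K ^ (n + 1) →
      f r ≤ s7psi (fun j => g (r / K ^ j)) n 0 := by
    intro n
    induction n with
    | zero =>
      intro r h1 h2
      rw [pow_zero] at h1
      rw [pow_one] at h2
      have hf12 : f r ≤ 1 / 2 := ha1 r ⟨h1, h2.le⟩
      rw [s7psi_zero]
      norm_num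
      linarith
    | succ n ih =>
      intro r h1 h2
      have hr1 : (1:ℝ) ≤ r := le_trans (hKge1 (n + 1)) h1
      have hKr : K ≤ r := by
        calc K = K ^ 1 := (pow_one K).symm
        _ ≤ K ^ (n + 1) := pow_le_pow_right₀ hK1.le (by omega)
        _ ≤ r := h1
      have hdiv1 : K ^ n ≤ r / K := by
        rw [le_div_iff₀ hK0, ← pow_succ]
        exact h1
      have hdiv2 : r / K < K ^ (n + 1) := by
        rw [div_lt_iff₀ hK0, ← pow_succ]
        exact h2
      have hIH := ih (r / K) hdiv1 hdiv2
      have hfun : (fun j => g (r / K / K ^ j)) = fun j => g (r / K ^ (j + 1)) := by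
        funext j
        rw [div_div, ← pow_succ']
      rw [hfun] at hIH
      have hbnds : ∀ j < n, 0 ≤ (fun j => g (r / K ^ (j + 1))) j
          ∧ (fun j => g (r / K ^ (j + 1))) j ≤ 4⁻¹ := by
        intro j hj
        have h1r : (1:ℝ) ≤ r / K ^ (j + 1) := by
          rw [le_div_iff₀ (hKp _), one_mul]
          calc K ^ (j + 1) ≤ K ^ (n + 1) := pow_le_pow_right₀ hK1.le (by omega)
          _ ≤ r := h1
        refine ⟨hg0 _ h1r, ?_⟩
        have := ha2 _ h1r
        norm_num
        linarith
      have hrK1 : (1:ℝ) ≤ r / K := by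
        rw [le_div_iff₀ hK0, one_mul]; exact hKr
      have hsq : f (r / K) ^ 2 ≤ (s7psi (fun j => g (r / K ^ (j + 1))) n 0) ^ 2 :=
        pow_le_pow_left₀ (hf0 _ hrK1) hIH 2
      have hps := s7psi_sq n (fun j => g (r / K ^ (j + 1))) 0 hbnds
      have hstep := hb r hKr
      rw [s7psi_succ]
      simp only [pow_zero, div_one, pow_one, Nat.zero_add] at hps ⊢
      linarith [hstep, le_trans hsq hps]
  -- linearized pointwise bound
  set D : ℕ → ℝ := fun j => (2:ℝ) ^ (j + 1) * (2⁻¹ : ℝ) ^ (2 ^ j) with hDdef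
  have hD0 : ∀ j, 0 ≤ D j := fun j => by rw [hDdef]; positivity
  have key2 : ∀ n : ℕ, ∀ r : ℝ, K ^ n ≤ r → r < K ^ (n + 1) →
      f r ≤ (2⁻¹ : ℝ) ^ (2 ^ n)
        + ∑ j ∈ Finset.range n, D j * g (r / K ^ j) := by
    intro n r h1 h2
    refine le_trans (key n r h1 h2) ?_
    unfold s7psi
    simp only [Nat.add_zero]
    refine add_le_add le_rfl (Finset.sum_le_sum ?_)
    intro j hj
    have hjn := Finset.mem_range.1 hj
    have h1r : (1:ℝ) ≤ r / K ^ j := by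
      rw [le_div_iff₀ (hKp _), one_mul]
      calc K ^ j ≤ K ^ n := pow_le_pow_right₀ hK1.le (by omega)
      _ ≤ r := h1
    have hg0' : (0:ℝ) ≤ g (r / K ^ j) := hg0 _ h1r
    have hg4 : g (r / K ^ j) ≤ 4⁻¹ := by
      have := ha2 _ h1r; norm_num; linarith
    obtain ⟨e, he⟩ : ∃ e : ℕ, 2 ^ j = e + 1 :=
      ⟨2 ^ j - 1, by have := Nat.one_le_two_pow (n := j); omega⟩
    have hmvt := s7_pow_sub_pow e (a := g (r / K ^ j) + 4⁻¹) (b := (4⁻¹:ℝ)) (M := (2⁻¹:ℝ))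
      (by norm_num) (by linarith) (by linarith)
    have hcast : ((e : ℝ) + 1) = (2:ℝ) ^ j := by
      have h2j : (2:ℝ) ^ j = ((e : ℝ) + 1) := by exact_mod_cast he
      linarith
    have hco : D j = ((e : ℝ) + 1) * (2⁻¹ : ℝ) ^ e := by
      rw [hDdef]
      simp only []
      rw [he, hcast, pow_succ, pow_succ]
      ring
    rw [he, hco]
    have hsimp : g (r / K ^ j) + 4⁻¹ - 4⁻¹ = g (r / K ^ j) := by ring
    rw [hsimp] at hmvt
    linarith
  -- ENNReal setup
  set Bc : ℕ → ℝ := fun n => (K ^ (n + 1)) ^ θ / K ^ n * (2⁻¹ : ℝ) ^ (2 ^ n) with hBdef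
  have hB0 : ∀ n, 0 ≤ Bc n := by
    intro n
    rw [hBdef]
    have := Real.rpow_nonneg (hKp (n + 1)).le θ
    positivity
  set T1 : ℝ → ENNReal := fun r => ∑' n : ℕ,
    (Ico (K ^ n) (K ^ (n + 1))).indicator (fun _ => ENNReal.ofReal (Bc n)) r with hT1def
  set T2 : ℝ → ENNReal := fun r => ∑' j : ℕ,
    (Ici (K ^ j)).indicator
      (fun r => ENNReal.ofReal (D j * (r ^ (θ - 1) * g (r / K ^ j)))) r with hT2def
  -- pointwise domination
  have hpt : ∀ r ∈ Ioi (1:ℝ), ENNReal.ofReal (r ^ (θ - 1) * f r) ≤ T1 r + T2 r := by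
    intro r hr
    have hr1 : (1:ℝ) ≤ r := (le_of_lt hr)
    obtain ⟨n, hn1, hn2⟩ := hblock r hr1
    have hr0 : (0:ℝ) < r := lt_trans one_pos hr
    have hw0 : (0:ℝ) ≤ r ^ (θ - 1) := Real.rpow_nonneg hr0.le _
    have hgj0 : ∀ j ∈ Finset.range n, (0:ℝ) ≤ g (r / K ^ j) := by
      intro j hj
      refine hg0 _ ?_
      rw [ge_iff_le, le_div_iff₀ (hKp _), one_mul]
      calc K ^ j ≤ K ^ n := pow_le_pow_right₀ hK1.le (le_of_lt (Finset.mem_range.1 hj))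
      _ ≤ r := hn1
    have hwb : r ^ (θ - 1) ≤ (K ^ (n + 1)) ^ θ / K ^ n := by
      have hrw : r ^ (θ - 1) = r ^ θ / r ^ (1:ℝ) := Real.rpow_sub hr0 θ 1
      rw [hrw, Real.rpow_one]
      exact div_le_div₀ (Real.rpow_nonneg (hKp (n + 1)).le θ)
        (Real.rpow_le_rpow hr0.le hn2.le hθ.le) (hKp n) hn1
    have hbd := key2 n r hn1 hn2
    have hterm0 : (0:ℝ) ≤ ∑ j ∈ Finset.range n, D j * g (r / K ^ j) :=
      Finset.sum_nonneg (fun j hj => mul_nonneg (hD0 j) (hgj0 j hj))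
    calc ENNReal.ofReal (r ^ (θ - 1) * f r)
        ≤ ENNReal.ofReal (r ^ (θ - 1) * ((2⁻¹:ℝ) ^ (2 ^ n)
            + ∑ j ∈ Finset.range n, D j * g (r / K ^ j))) :=
          ENNReal.ofReal_le_ofReal (mul_le_mul_of_nonneg_left hbd hw0)
      _ = ENNReal.ofReal (r ^ (θ - 1) * (2⁻¹:ℝ) ^ (2 ^ n))
            + ∑ j ∈ Finset.range n,
              ENNReal.ofReal (D j * (r ^ (θ - 1) * g (r / K ^ j))) := by
          rw [mul_add, ENNReal.ofReal_add (by positivity) (by positivity), Finset.mul_sum]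
          congr 1
          rw [ENNReal.ofReal_sum_of_nonneg
            (fun j hj => mul_nonneg hw0 (mul_nonneg (hD0 j) (hgj0 j hj)))]
          refine Finset.sum_congr rfl (fun j hj => ?_)
          congr 1
          ring
      _ ≤ T1 r + T2 r := by
          refine add_le_add ?_ ?_
          · calc ENNReal.ofReal (r ^ (θ - 1) * (2⁻¹:ℝ) ^ (2 ^ n))
                ≤ ENNReal.ofReal (Bc n) := by
                  refine ENNReal.ofReal_le_ofReal ?_
                  rw [hBdef]
                  exact mul_le_mul_of_nonneg_right hwb (by positivity)
              _ = (Ico (K ^ n) (K ^ (n + 1))).indicator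
                    (fun _ => ENNReal.ofReal (Bc n)) r := by
                  rw [indicator_of_mem (show r ∈ Ico (K ^ n) (K ^ (n + 1)) from ⟨hn1, hn2⟩)]
              _ ≤ T1 r := by rw [hT1def]; exact ENNReal.le_tsum n
          · rw [hT2def]
            have heq : ∀ j ∈ Finset.range n,
                ENNReal.ofReal (D j * (r ^ (θ - 1) * g (r / K ^ j)))
                = (Ici (K ^ j)).indicator
                    (fun r => ENNReal.ofReal (D j * (r ^ (θ - 1) * g (r / K ^ j)))) r := by
              intro j hj
              rw [indicator_of_mem]
              exact le_trans (le_trans (pow_le_pow_right₀ hK1.le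
                (le_of_lt (Finset.mem_range.1 hj))) hn1) le_rfl
            rw [Finset.sum_congr rfl heq]
            exact ENNReal.sum_le_tsum _
  -- measurability
  have hT1m : ∀ n : ℕ, Measurable ((Ico (K ^ n) (K ^ (n + 1))).indicator
      (fun _ : ℝ => ENNReal.ofReal (Bc n))) :=
    fun n => measurable_const.indicator measurableSet_Ico
  have hT2m : ∀ j : ℕ, Measurable ((Ici (K ^ j)).indicator
      (fun r : ℝ => ENNReal.ofReal (D j * (r ^ (θ - 1) * g (r / K ^ j))))) := by
    intro j
    refine Measurable.indicator ?_ measurableSet_Ici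
    exact (measurable_const.mul ((measurable_id.pow measurable_const).mul
      (hgm.comp (measurable_id.div_const (K ^ j))))).ennreal_ofReal
  -- split the integral
  have hmono : ∫⁻ r in Ioi (1:ℝ), ENNReal.ofReal (r ^ (θ - 1) * f r)
      ≤ ∫⁻ r in Ioi (1:ℝ), (T1 r + T2 r) := by
    refine lintegral_mono_ae ?_
    rw [ae_restrict_iff' measurableSet_Ioi]
    exact ae_of_all _ hpt
  have hsplit : ∫⁻ r in Ioi (1:ℝ), (T1 r + T2 r)
      = (∫⁻ r in Ioi (1:ℝ), T1 r) + ∫⁻ r in Ioi (1:ℝ), T2 r := by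
    refine lintegral_add_left ?_ _
    rw [hT1def]
    exact Measurable.ennreal_tsum hT1m
  -- bound for T1
  have hI1 : ∫⁻ r in Ioi (1:ℝ), T1 r ≤ ∑' n : ℕ, ENNReal.ofReal (Bc n * K ^ (n + 1)) := by
    rw [hT1def, lintegral_tsum (fun n => (hT1m n).aemeasurable)]
    refine ENNReal.tsum_le_tsum (fun n => ?_)
    calc ∫⁻ r in Ioi (1:ℝ), (Ico (K ^ n) (K ^ (n + 1))).indicator
          (fun _ => ENNReal.ofReal (Bc n)) r
        ≤ ∫⁻ r, (Ico (K ^ n) (K ^ (n + 1))).indicator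
          (fun _ => ENNReal.ofReal (Bc n)) r := setLIntegral_le_lintegral _ _
      _ = ENNReal.ofReal (Bc n) * volume (Ico (K ^ n) (K ^ (n + 1))) := by
          rw [lintegral_indicator measurableSet_Ico, setLIntegral_const]
      _ ≤ ENNReal.ofReal (Bc n) * ENNReal.ofReal (K ^ (n + 1)) := by
          rw [Real.volume_Ico]
          exact mul_le_mul_right (ENNReal.ofReal_le_ofReal
            (by have := (hKp n).le; linarith [sub_le_self (K ^ (n+1)) this])) _
      _ = ENNReal.ofReal (Bc n * K ^ (n + 1)) := (ENNReal.ofReal_mul (hB0 n)).symm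
  -- rpow/pow commutation
  have hKnat : ∀ m : ℕ, ((K : ℝ) ^ m) ^ θ = (K ^ θ) ^ m := by
    intro m
    rw [← Real.rpow_natCast K m, ← Real.rpow_natCast (K ^ θ) m, ← Real.rpow_mul hK0.le,
      ← Real.rpow_mul hK0.le, mul_comm]
  have hKθ0 : (0:ℝ) ≤ K ^ θ := Real.rpow_nonneg hK0.le θ
  -- finiteness of the first series
  have hS1 : (∑' n : ℕ, ENNReal.ofReal (Bc n * K ^ (n + 1))) ≠ ⊤ := by
    have hrw : ∀ n : ℕ, Bc n * K ^ (n + 1)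
        = (K ^ θ * K) * ((K ^ θ) ^ n * (2⁻¹ : ℝ) ^ (2 ^ n)) := by
      intro n
      rw [hBdef]
      simp only []
      rw [hKnat (n + 1)]
      have hKn : (K:ℝ) ^ (n + 1) = K ^ n * K := pow_succ K n
      field_simp
      ring
    rw [tsum_congr (fun n => congrArg ENNReal.ofReal (hrw n))]
    have hsum : Summable (fun n : ℕ => (K ^ θ * K) * ((K ^ θ) ^ n * (2⁻¹ : ℝ) ^ (2 ^ n))) :=
      (s7_summable hKθ0).mul_left _
    rw [← ENNReal.ofReal_tsum_of_nonneg (fun n => by positivity) hsum]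
    exact ENNReal.ofReal_ne_top
  -- the g-integral
  set T : ENNReal := ∫⁻ s in Ici (1:ℝ), ENNReal.ofReal (s ^ (θ - 1) * g s) with hTdef
  have hTfin : T ≠ ⊤ := by
    rw [hTdef, ← setLIntegral_congr (Ioi_ae_eq_Ici (a := (1:ℝ)))]
    exact hgint
  -- bound for T2
  have hI2 : ∫⁻ r in Ioi (1:ℝ), T2 r
      ≤ (∑' j : ℕ, ENNReal.ofReal (D j * (K ^ θ) ^ j)) * T := by
    rw [hT2def, lintegral_tsum (fun j => (hT2m j).aemeasurable), ← ENNReal.tsum_mul_right]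
    refine ENNReal.tsum_le_tsum (fun j => ?_)
    calc ∫⁻ r in Ioi (1:ℝ), (Ici (K ^ j)).indicator
          (fun r => ENNReal.ofReal (D j * (r ^ (θ - 1) * g (r / K ^ j)))) r
        ≤ ∫⁻ r, (Ici (K ^ j)).indicator
          (fun r => ENNReal.ofReal (D j * (r ^ (θ - 1) * g (r / K ^ j)))) r :=
          setLIntegral_le_lintegral _ _
      _ = ∫⁻ r in Ici (K ^ j), ENNReal.ofReal (D j * (r ^ (θ - 1) * g (r / K ^ j))) := by
          rw [lintegral_indicator measurableSet_Ici]
      _ = ENNReal.ofReal (D j)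
            * ∫⁻ r in Ici (K ^ j), ENNReal.ofReal (r ^ (θ - 1) * g (r / K ^ j)) := by
          rw [← lintegral_const_mul' _ _ ENNReal.ofReal_ne_top]
          refine lintegral_congr (fun r => ?_)
          rw [ENNReal.ofReal_mul (hD0 j)]
      _ = ENNReal.ofReal (D j) * (ENNReal.ofReal ((K ^ j) ^ θ) * T) := by
          rw [s7_subst hgm θ (hKp j), hTdef]
      _ = ENNReal.ofReal (D j * (K ^ θ) ^ j) * T := by
          rw [← mul_assoc, ← ENNReal.ofReal_mul (hD0 j), hKnat j]
  -- finiteness of the second series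
  have hS2 : (∑' j : ℕ, ENNReal.ofReal (D j * (K ^ θ) ^ j)) ≠ ⊤ := by
    have hrw : ∀ j : ℕ, D j * (K ^ θ) ^ j
        = 2 * ((2 * K ^ θ) ^ j * (2⁻¹ : ℝ) ^ (2 ^ j)) := by
      intro j
      rw [hDdef]
      simp only []
      rw [pow_succ, mul_pow]
      ring
    rw [tsum_congr (fun j => congrArg ENNReal.ofReal (hrw j))]
    have hsum : Summable (fun j : ℕ => 2 * ((2 * K ^ θ) ^ j * (2⁻¹ : ℝ) ^ (2 ^ j))) :=
      (s7_summable (by positivity)).mul_left _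
    rw [← ENNReal.ofReal_tsum_of_nonneg (fun j => by positivity) hsum]
    exact ENNReal.ofReal_ne_top
  -- conclusion
  have htotal : ∫⁻ r in Ioi (1:ℝ), ENNReal.ofReal (r ^ (θ - 1) * f r)
      ≤ (∑' n : ℕ, ENNReal.ofReal (Bc n * K ^ (n + 1)))
        + (∑' j : ℕ, ENNReal.ofReal (D j * (K ^ θ) ^ j)) * T :=
    le_trans hmono (le_trans (le_of_eq hsplit) (add_le_add hI1 hI2))
  exact ne_top_of_le_ne_top
    (ENNReal.add_ne_top.2 ⟨hS1, ENNReal.mul_ne_top hS2 hTfin⟩) htotal
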